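/- Let u ≥ 0 be a continuous function on the closed unit disk B_1 ⊂ ℝ² and suppose there is a constant K ≥ 0 such that for all x₀ ∈ B_{1/2} and all r < 1/2, |u(x₀) − (1/(πr²))∫_{B_r(x₀)} u dx| ≤ K. Then there is a universal constant C such that max_{B_{1/2}} u ≤ C·(min_{B_{1/2}} u + K). -/
import Mathlib


open MeasureTheory Metric

private lemma harnack_step (u : EuclideanSpace ℝ (Fin 2) → ℝ) (K : ℝ) (hK : 0 ≤ K)
    (hcont : ContinuousOn u (closedBall (0 : EuclideanSpace ℝ (Fin 2)) 1))
    (hpos : ∀ x ∈ closedBall (0 : EuclideanSpace ℝ (Fin 2)) 1, 0 ≤ u x)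
    (hmvp : ∀ x₀ ∈ ball (0 : EuclideanSpace ℝ (Fin 2)) (1 / 2), ∀ r : ℝ, 0 < r → r < 1 / 2 →
        |u x₀ - (Real.pi * r ^ 2)⁻¹ * ∫ x in ball x₀ r, u x| ≤ K)
    (p q : EuclideanSpace ℝ (Fin 2)) (hp : p ∈ ball (0 : EuclideanSpace ℝ (Fin 2)) (1/2))
    (hq : q ∈ ball (0 : EuclideanSpace ℝ (Fin 2)) (1/2)) (hd : dist p q ≤ 1/3) :
    u p ≤ 15 * (u q + K) := by
  have hint : IntegrableOn u (closedBall (0 : EuclideanSpace ℝ (Fin 2)) 1) :=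
    hcont.integrableOn_compact (isCompact_closedBall _ _)
  have hsub1 : ball p (1/8) ⊆ ball q (11/24) := by
    apply ball_subset_ball'
    linarith
  have hsub2 : ball q (11/24) ⊆ closedBall (0 : EuclideanSpace ℝ (Fin 2)) 1 := by
    intro z hz
    simp only [mem_ball] at hz
    simp only [mem_closedBall]
    have := mem_ball.mp hq
    calc dist z 0 ≤ dist z q + dist q 0 := dist_triangle _ _ _
      _ ≤ 1 := by linarith
  set I := ∫ x in ball p (1/8), u x with hI
  set J := ∫ x in ball q (11/24), u x with hJ
  have hJnn : 0 ≤ J := by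
    apply setIntegral_nonneg measurableSet_ball
    intro z hz; exact hpos z (hsub2 hz)
  have hIJ : I ≤ J := by
    apply setIntegral_mono_set (hint.mono_set hsub2)
    · filter_upwards [ae_restrict_mem measurableSet_ball] with z hz
      exact hpos z (hsub2 hz)
    · exact HasSubset.Subset.eventuallyLE hsub1
  have h1 := hmvp p hp (1/8) (by norm_num) (by norm_num)
  have h2 := hmvp q hq (11/24) (by norm_num) (by norm_num)
  have hup : u p ≤ (Real.pi * (1/8:ℝ) ^ 2)⁻¹ * I + K := by
    have := (abs_le.mp h1).2
    linarith
  have havg : (Real.pi * (11/24:ℝ) ^ 2)⁻¹ * J ≤ u q + K := by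
    have := (abs_le.mp h2).1
    linarith
  have hpi : (0:ℝ) < Real.pi := Real.pi_pos
  have hkey : (Real.pi * (1/8:ℝ) ^ 2)⁻¹ * I ≤ (121/9) * ((Real.pi * (11/24:ℝ) ^ 2)⁻¹ * J) := by
    have heq : (121/9 : ℝ) * ((Real.pi * (11/24:ℝ) ^ 2)⁻¹ * J) =
        (Real.pi * (1/8:ℝ) ^ 2)⁻¹ * J := by
      field_simp
      ring
    rw [heq]
    apply mul_le_mul_of_nonneg_left hIJ
    positivity
  have huq : 0 ≤ u q := hpos q (ball_subset_closedBall (ball_subset_ball (by norm_num) hq))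
  nlinarith [mul_le_mul_of_nonneg_left havg (by norm_num : (0:ℝ) ≤ 121/9)]

theorem harnack_chaining :
    ∃ C : ℝ, 0 < C ∧ ∀ (u : EuclideanSpace ℝ (Fin 2) → ℝ) (K : ℝ), 0 ≤ K →
      ContinuousOn u (Metric.closedBall (0 : EuclideanSpace ℝ (Fin 2)) 1) →
      (∀ x ∈ Metric.closedBall (0 : EuclideanSpace ℝ (Fin 2)) 1, 0 ≤ u x) →
      (∀ x₀ ∈ Metric.ball (0 : EuclideanSpace ℝ (Fin 2)) (1 / 2), ∀ r : ℝ, 0 < r → r < 1 / 2 →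
        |u x₀ - (Real.pi * r ^ 2)⁻¹ * ∫ x in Metric.ball x₀ r, u x| ≤ K) →
      ∀ x ∈ Metric.ball (0 : EuclideanSpace ℝ (Fin 2)) (1 / 2),
        ∀ y ∈ Metric.ball (0 : EuclideanSpace ℝ (Fin 2)) (1 / 2),
          u x ≤ C * (u y + K) := by
  refine ⟨4000, by norm_num, ?_⟩
  intro u K hK hcont hpos hmvp x hx y hy
  set p1 : EuclideanSpace ℝ (Fin 2) := (2/3 : ℝ) • x + (1/3 : ℝ) • y with hp1
  set p2 : EuclideanSpace ℝ (Fin 2) := (1/3 : ℝ) • x + (2/3 : ℝ) • y with hp2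
  have hp1mem : p1 ∈ ball (0 : EuclideanSpace ℝ (Fin 2)) (1/2) :=
    (convex_ball (0 : EuclideanSpace ℝ (Fin 2)) (1/2)) hx hy (by norm_num) (by norm_num)
      (by norm_num)
  have hp2mem : p2 ∈ ball (0 : EuclideanSpace ℝ (Fin 2)) (1/2) :=
    (convex_ball (0 : EuclideanSpace ℝ (Fin 2)) (1/2)) hx hy (by norm_num) (by norm_num)
      (by norm_num)
  have hxy : dist x y ≤ 1 := by
    have h1 := mem_ball.mp hx
    have h2 := mem_ball.mp hy
    calc dist x y ≤ dist x 0 + dist 0 y := dist_triangle _ _ _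
      _ ≤ 1 := by rw [dist_comm (0 : EuclideanSpace ℝ (Fin 2)) y]; linarith
  have hstep : ∀ a b : EuclideanSpace ℝ (Fin 2), a - b = (1/3 : ℝ) • (x - y) →
      dist a b ≤ 1/3 := by
    intro a b hab
    rw [dist_eq_norm, hab, norm_smul, ← dist_eq_norm]
    have h13 : ‖(1/3 : ℝ)‖ = 1/3 := by norm_num
    rw [h13]
    linarith
  have hd1 : dist x p1 ≤ 1/3 := hstep x p1 (by rw [hp1]; module)
  have hd2 : dist p1 p2 ≤ 1/3 := hstep p1 p2 (by rw [hp1, hp2]; module)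
  have hd3 : dist p2 y ≤ 1/3 := hstep p2 y (by rw [hp2]; module)
  have s1 := harnack_step u K hK hcont hpos hmvp x p1 hx hp1mem hd1
  have s2 := harnack_step u K hK hcont hpos hmvp p1 p2 hp1mem hp2mem hd2
  have s3 := harnack_step u K hK hcont hpos hmvp p2 y hp2mem hy hd3
  have huy : 0 ≤ u y := hpos y (ball_subset_closedBall (ball_subset_ball (by norm_num) hy))
  linarith
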